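/- arXiv:2001.11246 — 2 statements merged into one kernel-verified Lean document; each statement's English description precedes it below -/
import Mathlib

section
/- Let η(t) be defined recursively by η_x(t+1) = η_x(t) − 𝟙{η_x(t) > 0} + ∑_{y : η_y(t) > 0} 𝟙{u_{t+1}(y) = x}, for a given sequence u_1, u_2, … : Fin L → Fin L and initial configuration η(0). Define B̃_x(t) := ∑_{s=0}^{t−1} ∑_{y} 𝟙{u_{s+1}(y) = x}. Then for every t ≥ 0 and x, η_x(t) ≤ max(η_x(0) − t, 0) + B̃_x(t). -/
theorem stmt_2 {L : ℕ} (η : ℕ → Fin L → ℕ) (u : ℕ → Fin L → Fin L)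
    (hrec : ∀ t x, η (t + 1) x =
      η t x - (if 0 < η t x then 1 else 0) +
        (Finset.univ.filter (fun y => 0 < η t y ∧ u (t + 1) y = x)).card) :
    ∀ t x, η t x ≤ (η 0 x - t) +
      ∑ s ∈ Finset.range t, (Finset.univ.filter (fun y => u (s + 1) y = x)).card := by
  intro t
  induction t with
  | zero => intro x; simp
  | succ t ih =>
    intro x
    have hcard : (Finset.univ.filter (fun y => 0 < η t y ∧ u (t + 1) y = x)).card ≤
        (Finset.univ.filter (fun y => u (t + 1) y = x)).card := by
      apply Finset.card_le_card
      intro y hy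
      simp only [Finset.mem_filter] at *
      exact ⟨hy.1, hy.2.2⟩
    rw [hrec t x, Finset.sum_range_succ]
    have := ih x
    by_cases h : 0 < η t x
    · simp only [h, if_pos]
      omega
    · simp only [h, if_neg, not_false_iff]
      omega
end

section
/- Let Ω = {η : Fin L → ℕ | ∑_x η_x = N}. Say η, ξ ∈ Ω are adjacent if there exist x ≠ y with ξ_x = η_x − 1, ξ_y = η_y + 1, and ξ_z = η_z otherwise. Then any two configurations η, ξ ∈ Ω are connected by a path of adjacent configurations of length at most N, and moreover the path can be chosen so that every intermediate configuration ζ satisfies ‖ζ‖_∞ ≤ max(‖η‖_∞, ‖ξ‖_∞). -/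
/-- Two configurations are adjacent if one is obtained from the other by moving
a single particle from site `x` to site `y`. -/
def AdjacentConfig {L : ℕ} (η ξ : Fin L → ℕ) : Prop :=
  ∃ x y : Fin L, x ≠ y ∧ ξ x + 1 = η x ∧ ξ y = η y + 1 ∧
    ∀ z, z ≠ x → z ≠ y → ξ z = η z

open Finset

private lemma split2 {L : ℕ} (f : Fin L → ℕ) {x y : Fin L} (hxy : x ≠ y) :
    ∑ z, f z = f x + f y + ∑ z ∈ (Finset.univ.erase x).erase y, f z := by
  rw [← Finset.add_sum_erase _ f (Finset.mem_univ x),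
    ← Finset.add_sum_erase _ f (Finset.mem_erase.mpr ⟨hxy.symm, Finset.mem_univ y⟩)]
  ring

private lemma key {L : ℕ} (M : ℕ) : ∀ d : ℕ, ∀ η ξ : Fin L → ℕ,
    ∑ x, η x = ∑ x, ξ x → ∑ x, (η x - ξ x) = d →
    (∀ x, η x ≤ M) → (∀ x, ξ x ≤ M) →
    ∃ (k : ℕ) (ζ : ℕ → Fin L → ℕ), k ≤ d ∧ ζ 0 = η ∧ ζ k = ξ ∧
      (∀ j < k, AdjacentConfig (ζ j) (ζ (j + 1))) ∧
      (∀ j ≤ k, ∀ x, ζ j x ≤ M) := by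
  intro d
  induction d with
  | zero =>
    intro η ξ hsum hd hηM hξM
    have hle : ∀ i ∈ Finset.univ, η i ≤ ξ i := by
      intro i _
      have := Finset.sum_eq_zero_iff.mp hd i (Finset.mem_univ i)
      omega
    have heq : η = ξ := by
      funext i
      exact (Finset.sum_eq_sum_iff_of_le hle).mp hsum i (Finset.mem_univ i)
    exact ⟨0, fun _ => η, le_refl 0, rfl, heq, by omega,
      fun j hj x => by simpa using hηM x⟩
  | succ d ih =>
    intro η ξ hsum hd hηM hξM
    obtain ⟨x, -, hx0⟩ : ∃ x ∈ Finset.univ, η x - ξ x ≠ 0 := by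
      by_contra h
      push_neg at h
      rw [Finset.sum_eq_zero h] at hd
      omega
    have hx : ξ x < η x := by omega
    obtain ⟨y, hy⟩ : ∃ y, η y < ξ y := by
      by_contra h
      push_neg at h
      have := (Finset.sum_eq_sum_iff_of_le (fun i _ => h i)).mp hsum.symm x
        (Finset.mem_univ x)
      omega
    have hxy : x ≠ y := by rintro rfl; omega
    set η' : Fin L → ℕ :=
      Function.update (Function.update η x (η x - 1)) y (η y + 1) with hη'def
    have hη'x : η' x = η x - 1 := by
      simp [hη'def, Function.update_of_ne hxy]
    have hη'y : η' y = η y + 1 := by simp [hη'def]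
    have hη'z : ∀ z, z ≠ x → z ≠ y → η' z = η z := by
      intro z hzx hzy
      simp [hη'def, Function.update_of_ne hzy, Function.update_of_ne hzx]
    have htail : ∑ z ∈ (Finset.univ.erase x).erase y, η' z
        = ∑ z ∈ (Finset.univ.erase x).erase y, η z :=
      Finset.sum_congr rfl (fun z hz => by
        rw [Finset.mem_erase, Finset.mem_erase] at hz
        exact hη'z z hz.2.1 hz.1)
    have htail2 : ∑ z ∈ (Finset.univ.erase x).erase y, (η' z - ξ z)
        = ∑ z ∈ (Finset.univ.erase x).erase y, (η z - ξ z) :=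
      Finset.sum_congr rfl (fun z hz => by
        rw [Finset.mem_erase, Finset.mem_erase] at hz
        rw [hη'z z hz.2.1 hz.1])
    have e1 := split2 η' hxy
    have e2 := split2 η hxy
    have e3 := split2 (fun w => η' w - ξ w) hxy
    have e4 := split2 (fun w => η w - ξ w) hxy
    have hsum' : ∑ z, η' z = ∑ z, ξ z := by omega
    have hd' : ∑ z, (η' z - ξ z) = d := by omega
    have hη'M : ∀ z, η' z ≤ M := by
      intro z
      by_cases hzy : z = y
      · rw [hzy, hη'y]; have := hξM y; omega
      by_cases hzx : z = x
      · rw [hzx, hη'x]; have := hηM x; omega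
      · rw [hη'z z hzx hzy]; exact hηM z
    have hadj0 : AdjacentConfig η η' := ⟨x, y, hxy, by omega, hη'y, hη'z⟩
    obtain ⟨k, ζ, hk, hζ0, hζk, hadj, hbd⟩ := ih η' ξ hsum' hd' hη'M hξM
    refine ⟨k + 1, fun j => if j = 0 then η else ζ (j - 1), by omega, by simp, ?_, ?_, ?_⟩
    · simpa using hζk
    · intro j hj
      rcases Nat.eq_zero_or_pos j with rfl | hjpos
      · simpa [hζ0] using hadj0
      · have hj0 : j ≠ 0 := by omega
        have hj1 : j + 1 ≠ 0 := by omega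
        simp only [if_neg hj0, if_neg hj1]
        have h2 : j + 1 - 1 = (j - 1) + 1 := by omega
        rw [h2]
        exact hadj (j - 1) (by omega)
    · intro j hj z
      rcases Nat.eq_zero_or_pos j with rfl | hjpos
      · simpa using hηM z
      · have hj0 : j ≠ 0 := by omega
        simp only [if_neg hj0]
        exact hbd (j - 1) (by omega) z

theorem stmt_11 {L N : ℕ} (η ξ : Fin L → ℕ)
    (hη : ∑ x, η x = N) (hξ : ∑ x, ξ x = N) :
    ∃ (k : ℕ) (ζ : ℕ → Fin L → ℕ), k ≤ N ∧ ζ 0 = η ∧ ζ k = ξ ∧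
      (∀ j < k, AdjacentConfig (ζ j) (ζ (j + 1))) ∧
      (∀ j ≤ k, ∀ x, ζ j x ≤ max (Finset.univ.sup η) (Finset.univ.sup ξ)) := by
  set M := max (Finset.univ.sup η) (Finset.univ.sup ξ) with hM
  have hηM : ∀ x, η x ≤ M :=
    fun x => le_trans (Finset.le_sup (Finset.mem_univ x)) (le_max_left _ _)
  have hξM : ∀ x, ξ x ≤ M :=
    fun x => le_trans (Finset.le_sup (Finset.mem_univ x)) (le_max_right _ _)
  have hdN : ∑ x, (η x - ξ x) ≤ N := by
    calc ∑ x, (η x - ξ x) ≤ ∑ x, η x :=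
          Finset.sum_le_sum (fun i _ => Nat.sub_le _ _)
      _ = N := hη
  obtain ⟨k, ζ, hk, h0, hk', hadj, hbd⟩ :=
    key M (∑ x, (η x - ξ x)) η ξ (hη.trans hξ.symm) rfl hηM hξM
  exact ⟨k, ζ, le_trans hk hdN, h0, hk', hadj, hbd⟩
end
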